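/- Let P = MvPolynomial ℕ ℚ and define on its augmentation ideal the three bilinear operations ≺, ∘, ≻ on nonconstant monomials by the max-variable rule. Then these operations satisfy all the dendriform trialgebra axioms: ∘ is associative, and for all x, y, z in P (extending the operations by 0 when a constant monomial is involved): (x ≺ y) ≺ z = x ≺ (y ≺ z + y ∘ z + y ≻ z), (x ≻ y) ≺ z = x ≻ (y ≺ z), (x ≺ y + x ∘ y + x ≻ y) ≻ z = x ≻ (y ≻ z), (x ≻ y) ∘ z = x ≻ (y ∘ z), (x ≺ y) ∘ z = x ∘ (y ≻ z), and (x ∘ y) ≺ z = x ∘ (y ≺ z); moreover x ≺ y + x ∘ y + x ≻ y = x·y whenever x and y are nonconstant monomials. This is the commutative dendriform trialgebra structure whose image realizes the free commutative dendriform trialgebra inside quasi-symmetric functions. -/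

import Mathlib

open Classical

/-- The right operation `≻` on `MvPolynomial ℕ ℚ`: on monomials, `m ≻ m' = m m'` if `m`
and `m'` are both nonconstant and the largest variable index of `m` is smaller than that
of `m'`, and `0` otherwise; extended bilinearly. -/
noncomputable def pSucc (x y : MvPolynomial ℕ ℚ) : MvPolynomial ℕ ℚ :=
  x.support.sum fun m => y.support.sum fun m' =>
    if m ≠ 0 ∧ m' ≠ 0 ∧ m.support.max < m'.support.max
    then MvPolynomial.monomial (m + m') (x.coeff m * y.coeff m') else 0

/-- The middle operation `∘` on `MvPolynomial ℕ ℚ`: on monomials, `m ∘ m' = m m'` if `m`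
and `m'` are both nonconstant with the same largest variable index, and `0` otherwise;
extended bilinearly. -/
noncomputable def pCirc (x y : MvPolynomial ℕ ℚ) : MvPolynomial ℕ ℚ :=
  x.support.sum fun m => y.support.sum fun m' =>
    if m ≠ 0 ∧ m' ≠ 0 ∧ m.support.max = m'.support.max
    then MvPolynomial.monomial (m + m') (x.coeff m * y.coeff m') else 0

/-- The left operation `≺` on `MvPolynomial ℕ ℚ`: on monomials, `m ≺ m' = m m'` if `m`
and `m'` are both nonconstant and the largest variable index of `m` is greater than that
of `m'`, and `0` otherwise; extended bilinearly. -/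
noncomputable def pPrec (x y : MvPolynomial ℕ ℚ) : MvPolynomial ℕ ℚ :=
  x.support.sum fun m => y.support.sum fun m' =>
    if m ≠ 0 ∧ m' ≠ 0 ∧ m'.support.max < m.support.max
    then MvPolynomial.monomial (m + m') (x.coeff m * y.coeff m') else 0

section DendriformAux

open MvPolynomial

/-- The generic bilinear operation on `MvPolynomial ℕ ℚ` determined by a predicate on
pairs of monomials. -/
noncomputable def dOp (p : (ℕ →₀ ℕ) → (ℕ →₀ ℕ) → Prop) (x y : MvPolynomial ℕ ℚ) :
    MvPolynomial ℕ ℚ :=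
  x.support.sum fun m => y.support.sum fun m' =>
    if p m m'
    then MvPolynomial.monomial (m + m') (x.coeff m * y.coeff m') else 0

abbrev cP (m m' : ℕ →₀ ℕ) : Prop := m ≠ 0 ∧ m' ≠ 0 ∧ m'.support.max < m.support.max
abbrev cC (m m' : ℕ →₀ ℕ) : Prop := m ≠ 0 ∧ m' ≠ 0 ∧ m.support.max = m'.support.max
abbrev cS (m m' : ℕ →₀ ℕ) : Prop := m ≠ 0 ∧ m' ≠ 0 ∧ m.support.max < m'.support.max

lemma pPrec_eq : pPrec = dOp cP := by
  funext x y
  exact Finset.sum_congr rfl fun m _ => Finset.sum_congr rfl fun m' _ => by congr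

lemma pCirc_eq : pCirc = dOp cC := by
  funext x y
  exact Finset.sum_congr rfl fun m _ => Finset.sum_congr rfl fun m' _ => by congr

lemma pSucc_eq : pSucc = dOp cS := by
  funext x y
  exact Finset.sum_congr rfl fun m _ => Finset.sum_congr rfl fun m' _ => by congr

lemma dOp_eq (p) (x y : MvPolynomial ℕ ℚ) :
    dOp p x y = Finsupp.sum (AddMonoidAlgebra.coeff x) fun m c => Finsupp.sum (AddMonoidAlgebra.coeff y) fun m' c' =>
      if p m m' then MvPolynomial.monomial (m + m') (c * c') else 0 := rfl

lemma dOp_monomial (p) (m m' : ℕ →₀ ℕ) (a b : ℚ) :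
    dOp p (monomial m a) (monomial m' b) =
      if p m m' then MvPolynomial.monomial (m + m') (a * b) else 0 := by
  rw [dOp_eq]
  show Finsupp.sum (Finsupp.single m a) _ = _
  rw [Finsupp.sum_single_index (by simp [Finsupp.sum_single_index])]
  show Finsupp.sum (Finsupp.single m' b) _ = _
  rw [Finsupp.sum_single_index (by simp)]

lemma dOp_zero_left (p) (y : MvPolynomial ℕ ℚ) : dOp p 0 y = 0 := by
  rw [dOp_eq]; exact Finsupp.sum_zero_index

lemma dOp_zero_right (p) (x : MvPolynomial ℕ ℚ) : dOp p x 0 = 0 := by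
  rw [dOp_eq]; simp [Finsupp.sum_zero_index]

lemma dOp_add_left (p) (x x' y : MvPolynomial ℕ ℚ) :
    dOp p (x + x') y = dOp p x y + dOp p x' y := by
  rw [dOp_eq, dOp_eq, dOp_eq]
  apply Finsupp.sum_add_index'
  · intro m; simp
  · intro m a b
    rw [← Finsupp.sum_add]
    congr 1; funext m' c'
    split_ifs with h
    · rw [add_mul, map_add]
    · simp

lemma dOp_add_right (p) (x y y' : MvPolynomial ℕ ℚ) :
    dOp p x (y + y') = dOp p x y + dOp p x y' := by
  rw [dOp_eq, dOp_eq, dOp_eq, ← Finsupp.sum_add]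
  congr 1; funext m c
  apply Finsupp.sum_add_index'
  · intro m'; simp
  · intro m' a b
    split_ifs with h
    · rw [mul_add, map_add]
    · simp

lemma dOp_ite_left (p) (P : Prop) [Decidable P] (u : MvPolynomial ℕ ℚ) (y) :
    dOp p (if P then u else 0) y = if P then dOp p u y else 0 := by
  split_ifs <;> simp [dOp_zero_left]

lemma dOp_ite_right (p) (P : Prop) [Decidable P] (x) (u : MvPolynomial ℕ ℚ) :
    dOp p x (if P then u else 0) = if P then dOp p x u else 0 := by
  split_ifs <;> simp [dOp_zero_right]

lemma support_add_max (m m' : ℕ →₀ ℕ) :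
    (m + m').support.max = m.support.max ⊔ m'.support.max := by
  rw [← Finset.max_union]
  congr 1
  ext a
  simp only [Finsupp.mem_support_iff, Finsupp.add_apply, Finset.mem_union, ← Nat.pos_iff_ne_zero]
  omega

lemma exists_max (m : ℕ →₀ ℕ) (h : m ≠ 0) : ∃ n : ℕ, m.support.max = WithBot.some n := by
  have : m.support.Nonempty := Finsupp.support_nonempty_iff.mpr h
  exact ⟨m.support.max' this, (Finset.coe_max' this).symm⟩

lemma some_sup (a b : ℕ) : (WithBot.some a) ⊔ (WithBot.some b) = WithBot.some (max a b) :=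
  (WithBot.coe_sup a b).symm

end DendriformAux

section DendriformAxioms

open MvPolynomial

lemma ax1 : ∀ x y z : MvPolynomial ℕ ℚ, dOp cC (dOp cC x y) z = dOp cC x (dOp cC y z) := by
  intro x y z
  induction x using MvPolynomial.induction_on' with
  | add p q hp hq =>
      try simp only [dOp_add_left, dOp_add_right] at hp hq
      simp only [dOp_add_left, dOp_add_right]
      linear_combination hp + hq
  | monomial m a =>
    induction y using MvPolynomial.induction_on' with
    | add p q hp hq =>
      try simp only [dOp_add_left, dOp_add_right] at hp hq
      simp only [dOp_add_left, dOp_add_right]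
      linear_combination hp + hq
    | monomial m' b =>
      induction z using MvPolynomial.induction_on' with
      | add p q hp hq =>
      try simp only [dOp_add_left, dOp_add_right] at hp hq
      simp only [dOp_add_left, dOp_add_right]
      linear_combination hp + hq
      | monomial m'' c =>
        simp only [dOp_monomial, dOp_add_left, dOp_add_right, dOp_ite_left, dOp_ite_right,
          dOp_monomial]
        by_cases h1 : m = 0; · simp [h1, cP, cC, cS]
        by_cases h2 : m' = 0; · simp [h2, cP, cC, cS]
        by_cases h3 : m'' = 0; · simp [h3, cP, cC, cS]
        obtain ⟨na, hna⟩ := exists_max m h1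
        obtain ⟨nb, hnb⟩ := exists_max m' h2
        obtain ⟨nc, hnc⟩ := exists_max m'' h3
        simp only [cP, cC, cS, support_add_max, hna, hnb, hnc, ne_eq, add_eq_zero, h1, h2, h3,
          false_and, and_false, not_false_eq_true, true_and, some_sup,
          Option.some.injEq, WithBot.coe_inj, WithBot.coe_lt_coe]
        split_ifs <;> first
          | rfl
          | (exfalso; omega)
          | (simp only [add_zero, zero_add, add_assoc, mul_assoc]; try (exfalso; omega))

lemma ax2 : ∀ x y z : MvPolynomial ℕ ℚ, dOp cP (dOp cP x y) z = dOp cP x (dOp cP y z + dOp cC y z + dOp cS y z) := by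
  intro x y z
  induction x using MvPolynomial.induction_on' with
  | add p q hp hq =>
      try simp only [dOp_add_left, dOp_add_right] at hp hq
      simp only [dOp_add_left, dOp_add_right]
      linear_combination hp + hq
  | monomial m a =>
    induction y using MvPolynomial.induction_on' with
    | add p q hp hq =>
      try simp only [dOp_add_left, dOp_add_right] at hp hq
      simp only [dOp_add_left, dOp_add_right]
      linear_combination hp + hq
    | monomial m' b =>
      induction z using MvPolynomial.induction_on' with
      | add p q hp hq =>
      try simp only [dOp_add_left, dOp_add_right] at hp hq
      simp only [dOp_add_left, dOp_add_right]
      linear_combination hp + hq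
      | monomial m'' c =>
        simp only [dOp_monomial, dOp_add_left, dOp_add_right, dOp_ite_left, dOp_ite_right,
          dOp_monomial]
        by_cases h1 : m = 0; · simp [h1, cP, cC, cS]
        by_cases h2 : m' = 0; · simp [h2, cP, cC, cS]
        by_cases h3 : m'' = 0; · simp [h3, cP, cC, cS]
        obtain ⟨na, hna⟩ := exists_max m h1
        obtain ⟨nb, hnb⟩ := exists_max m' h2
        obtain ⟨nc, hnc⟩ := exists_max m'' h3
        simp only [cP, cC, cS, support_add_max, hna, hnb, hnc, ne_eq, add_eq_zero, h1, h2, h3,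
          false_and, and_false, not_false_eq_true, true_and, some_sup,
          Option.some.injEq, WithBot.coe_inj, WithBot.coe_lt_coe]
        split_ifs <;> first
          | rfl
          | (exfalso; omega)
          | (simp only [add_zero, zero_add, add_assoc, mul_assoc]; try (exfalso; omega))

lemma ax3 : ∀ x y z : MvPolynomial ℕ ℚ, dOp cP (dOp cS x y) z = dOp cS x (dOp cP y z) := by
  intro x y z
  induction x using MvPolynomial.induction_on' with
  | add p q hp hq =>
      try simp only [dOp_add_left, dOp_add_right] at hp hq
      simp only [dOp_add_left, dOp_add_right]
      linear_combination hp + hq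
  | monomial m a =>
    induction y using MvPolynomial.induction_on' with
    | add p q hp hq =>
      try simp only [dOp_add_left, dOp_add_right] at hp hq
      simp only [dOp_add_left, dOp_add_right]
      linear_combination hp + hq
    | monomial m' b =>
      induction z using MvPolynomial.induction_on' with
      | add p q hp hq =>
      try simp only [dOp_add_left, dOp_add_right] at hp hq
      simp only [dOp_add_left, dOp_add_right]
      linear_combination hp + hq
      | monomial m'' c =>
        simp only [dOp_monomial, dOp_add_left, dOp_add_right, dOp_ite_left, dOp_ite_right,
          dOp_monomial]
        by_cases h1 : m = 0; · simp [h1, cP, cC, cS]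
        by_cases h2 : m' = 0; · simp [h2, cP, cC, cS]
        by_cases h3 : m'' = 0; · simp [h3, cP, cC, cS]
        obtain ⟨na, hna⟩ := exists_max m h1
        obtain ⟨nb, hnb⟩ := exists_max m' h2
        obtain ⟨nc, hnc⟩ := exists_max m'' h3
        simp only [cP, cC, cS, support_add_max, hna, hnb, hnc, ne_eq, add_eq_zero, h1, h2, h3,
          false_and, and_false, not_false_eq_true, true_and, some_sup,
          Option.some.injEq, WithBot.coe_inj, WithBot.coe_lt_coe]
        split_ifs <;> first
          | rfl
          | (exfalso; omega)
          | (simp only [add_zero, zero_add, add_assoc, mul_assoc]; try (exfalso; omega))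

lemma ax4 : ∀ x y z : MvPolynomial ℕ ℚ, dOp cS (dOp cP x y + dOp cC x y + dOp cS x y) z = dOp cS x (dOp cS y z) := by
  intro x y z
  induction x using MvPolynomial.induction_on' with
  | add p q hp hq =>
      try simp only [dOp_add_left, dOp_add_right] at hp hq
      simp only [dOp_add_left, dOp_add_right]
      linear_combination hp + hq
  | monomial m a =>
    induction y using MvPolynomial.induction_on' with
    | add p q hp hq =>
      try simp only [dOp_add_left, dOp_add_right] at hp hq
      simp only [dOp_add_left, dOp_add_right]
      linear_combination hp + hq
    | monomial m' b =>
      induction z using MvPolynomial.induction_on' with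
      | add p q hp hq =>
      try simp only [dOp_add_left, dOp_add_right] at hp hq
      simp only [dOp_add_left, dOp_add_right]
      linear_combination hp + hq
      | monomial m'' c =>
        simp only [dOp_monomial, dOp_add_left, dOp_add_right, dOp_ite_left, dOp_ite_right,
          dOp_monomial]
        by_cases h1 : m = 0; · simp [h1, cP, cC, cS]
        by_cases h2 : m' = 0; · simp [h2, cP, cC, cS]
        by_cases h3 : m'' = 0; · simp [h3, cP, cC, cS]
        obtain ⟨na, hna⟩ := exists_max m h1
        obtain ⟨nb, hnb⟩ := exists_max m' h2
        obtain ⟨nc, hnc⟩ := exists_max m'' h3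
        simp only [cP, cC, cS, support_add_max, hna, hnb, hnc, ne_eq, add_eq_zero, h1, h2, h3,
          false_and, and_false, not_false_eq_true, true_and, some_sup,
          Option.some.injEq, WithBot.coe_inj, WithBot.coe_lt_coe]
        split_ifs <;> first
          | rfl
          | (exfalso; omega)
          | (simp only [add_zero, zero_add, add_assoc, mul_assoc]; try (exfalso; omega))

lemma ax5 : ∀ x y z : MvPolynomial ℕ ℚ, dOp cC (dOp cS x y) z = dOp cS x (dOp cC y z) := by
  intro x y z
  induction x using MvPolynomial.induction_on' with
  | add p q hp hq =>
      try simp only [dOp_add_left, dOp_add_right] at hp hq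
      simp only [dOp_add_left, dOp_add_right]
      linear_combination hp + hq
  | monomial m a =>
    induction y using MvPolynomial.induction_on' with
    | add p q hp hq =>
      try simp only [dOp_add_left, dOp_add_right] at hp hq
      simp only [dOp_add_left, dOp_add_right]
      linear_combination hp + hq
    | monomial m' b =>
      induction z using MvPolynomial.induction_on' with
      | add p q hp hq =>
      try simp only [dOp_add_left, dOp_add_right] at hp hq
      simp only [dOp_add_left, dOp_add_right]
      linear_combination hp + hq
      | monomial m'' c =>
        simp only [dOp_monomial, dOp_add_left, dOp_add_right, dOp_ite_left, dOp_ite_right,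
          dOp_monomial]
        by_cases h1 : m = 0; · simp [h1, cP, cC, cS]
        by_cases h2 : m' = 0; · simp [h2, cP, cC, cS]
        by_cases h3 : m'' = 0; · simp [h3, cP, cC, cS]
        obtain ⟨na, hna⟩ := exists_max m h1
        obtain ⟨nb, hnb⟩ := exists_max m' h2
        obtain ⟨nc, hnc⟩ := exists_max m'' h3
        simp only [cP, cC, cS, support_add_max, hna, hnb, hnc, ne_eq, add_eq_zero, h1, h2, h3,
          false_and, and_false, not_false_eq_true, true_and, some_sup,
          Option.some.injEq, WithBot.coe_inj, WithBot.coe_lt_coe]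
        split_ifs <;> first
          | rfl
          | (exfalso; omega)
          | (simp only [add_zero, zero_add, add_assoc, mul_assoc]; try (exfalso; omega))

lemma ax6 : ∀ x y z : MvPolynomial ℕ ℚ, dOp cC (dOp cP x y) z = dOp cC x (dOp cS y z) := by
  intro x y z
  induction x using MvPolynomial.induction_on' with
  | add p q hp hq =>
      try simp only [dOp_add_left, dOp_add_right] at hp hq
      simp only [dOp_add_left, dOp_add_right]
      linear_combination hp + hq
  | monomial m a =>
    induction y using MvPolynomial.induction_on' with
    | add p q hp hq =>
      try simp only [dOp_add_left, dOp_add_right] at hp hq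
      simp only [dOp_add_left, dOp_add_right]
      linear_combination hp + hq
    | monomial m' b =>
      induction z using MvPolynomial.induction_on' with
      | add p q hp hq =>
      try simp only [dOp_add_left, dOp_add_right] at hp hq
      simp only [dOp_add_left, dOp_add_right]
      linear_combination hp + hq
      | monomial m'' c =>
        simp only [dOp_monomial, dOp_add_left, dOp_add_right, dOp_ite_left, dOp_ite_right,
          dOp_monomial]
        by_cases h1 : m = 0; · simp [h1, cP, cC, cS]
        by_cases h2 : m' = 0; · simp [h2, cP, cC, cS]
        by_cases h3 : m'' = 0; · simp [h3, cP, cC, cS]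
        obtain ⟨na, hna⟩ := exists_max m h1
        obtain ⟨nb, hnb⟩ := exists_max m' h2
        obtain ⟨nc, hnc⟩ := exists_max m'' h3
        simp only [cP, cC, cS, support_add_max, hna, hnb, hnc, ne_eq, add_eq_zero, h1, h2, h3,
          false_and, and_false, not_false_eq_true, true_and, some_sup,
          Option.some.injEq, WithBot.coe_inj, WithBot.coe_lt_coe]
        split_ifs <;> first
          | rfl
          | (exfalso; omega)
          | (simp only [add_zero, zero_add, add_assoc, mul_assoc]; try (exfalso; omega))

lemma ax7 : ∀ x y z : MvPolynomial ℕ ℚ, dOp cP (dOp cC x y) z = dOp cC x (dOp cP y z) := by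
  intro x y z
  induction x using MvPolynomial.induction_on' with
  | add p q hp hq =>
      try simp only [dOp_add_left, dOp_add_right] at hp hq
      simp only [dOp_add_left, dOp_add_right]
      linear_combination hp + hq
  | monomial m a =>
    induction y using MvPolynomial.induction_on' with
    | add p q hp hq =>
      try simp only [dOp_add_left, dOp_add_right] at hp hq
      simp only [dOp_add_left, dOp_add_right]
      linear_combination hp + hq
    | monomial m' b =>
      induction z using MvPolynomial.induction_on' with
      | add p q hp hq =>
      try simp only [dOp_add_left, dOp_add_right] at hp hq
      simp only [dOp_add_left, dOp_add_right]
      linear_combination hp + hq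
      | monomial m'' c =>
        simp only [dOp_monomial, dOp_add_left, dOp_add_right, dOp_ite_left, dOp_ite_right,
          dOp_monomial]
        by_cases h1 : m = 0; · simp [h1, cP, cC, cS]
        by_cases h2 : m' = 0; · simp [h2, cP, cC, cS]
        by_cases h3 : m'' = 0; · simp [h3, cP, cC, cS]
        obtain ⟨na, hna⟩ := exists_max m h1
        obtain ⟨nb, hnb⟩ := exists_max m' h2
        obtain ⟨nc, hnc⟩ := exists_max m'' h3
        simp only [cP, cC, cS, support_add_max, hna, hnb, hnc, ne_eq, add_eq_zero, h1, h2, h3,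
          false_and, and_false, not_false_eq_true, true_and, some_sup,
          Option.some.injEq, WithBot.coe_inj, WithBot.coe_lt_coe]
        split_ifs <;> first
          | rfl
          | (exfalso; omega)
          | (simp only [add_zero, zero_add, add_assoc, mul_assoc]; try (exfalso; omega))

end DendriformAxioms

theorem mvPolynomial_dendriform_trialgebra :
    (∀ x y z : MvPolynomial ℕ ℚ, pCirc (pCirc x y) z = pCirc x (pCirc y z)) ∧
    (∀ x y z : MvPolynomial ℕ ℚ,
        pPrec (pPrec x y) z = pPrec x (pPrec y z + pCirc y z + pSucc y z)) ∧
    (∀ x y z : MvPolynomial ℕ ℚ, pPrec (pSucc x y) z = pSucc x (pPrec y z)) ∧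
    (∀ x y z : MvPolynomial ℕ ℚ,
        pSucc (pPrec x y + pCirc x y + pSucc x y) z = pSucc x (pSucc y z)) ∧
    (∀ x y z : MvPolynomial ℕ ℚ, pCirc (pSucc x y) z = pSucc x (pCirc y z)) ∧
    (∀ x y z : MvPolynomial ℕ ℚ, pCirc (pPrec x y) z = pCirc x (pSucc y z)) ∧
    (∀ x y z : MvPolynomial ℕ ℚ, pPrec (pCirc x y) z = pCirc x (pPrec y z)) ∧
    (∀ m m' : ℕ →₀ ℕ, m ≠ 0 → m' ≠ 0 →
        pPrec (MvPolynomial.monomial m (1 : ℚ)) (MvPolynomial.monomial m' (1 : ℚ)) +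
          pCirc (MvPolynomial.monomial m (1 : ℚ)) (MvPolynomial.monomial m' (1 : ℚ)) +
          pSucc (MvPolynomial.monomial m (1 : ℚ)) (MvPolynomial.monomial m' (1 : ℚ)) =
        MvPolynomial.monomial m (1 : ℚ) * MvPolynomial.monomial m' (1 : ℚ)) := by
  refine ⟨?_, ?_, ?_, ?_, ?_, ?_, ?_, ?_⟩
  · simpa only [pCirc_eq] using ax1
  · simpa only [pPrec_eq, pCirc_eq, pSucc_eq] using ax2
  · simpa only [pPrec_eq, pSucc_eq] using ax3
  · simpa only [pPrec_eq, pCirc_eq, pSucc_eq] using ax4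
  · simpa only [pCirc_eq, pSucc_eq] using ax5
  · simpa only [pPrec_eq, pCirc_eq, pSucc_eq] using ax6
  · simpa only [pPrec_eq, pCirc_eq] using ax7
  · intro m m' hm hm'
    obtain ⟨na, hna⟩ := exists_max m hm
    obtain ⟨nb, hnb⟩ := exists_max m' hm'
    simp only [pPrec_eq, pCirc_eq, pSucc_eq, dOp_monomial, MvPolynomial.monomial_mul, one_mul,
      cP, cC, cS, hna, hnb, ne_eq, hm, hm', not_false_eq_true, true_and,
      Option.some.injEq, WithBot.coe_inj, WithBot.coe_lt_coe]
    split_ifs <;> first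
      | (exfalso; omega)
      | simp
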